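/- Every numerical semigroup H satisfies the inequality 2·g(H) ≥ F(H) + t(H). -/
import Mathlib


/-- A numerical semigroup: a subset of `ℕ` containing `0`, closed under addition,
with finite complement. -/
def IsNumericalSemigroup (H : Set ℕ) : Prop :=
  0 ∈ H ∧ (∀ a ∈ H, ∀ b ∈ H, a + b ∈ H) ∧ (Hᶜ).Finite

/-- The copy of `H` inside `ℤ`. -/
def NS.Z (H : Set ℕ) : Set ℤ := (fun n : ℕ => (n : ℤ)) '' H

/-- The genus `g(H)`: the number of gaps of `H`. -/
noncomputable def NS.gaps (H : Set ℕ) : ℕ := (Hᶜ).ncard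

/-- The Frobenius number `F(H) = max {n ∈ ℤ | n ∉ H}`. -/
noncomputable def NS.frob (H : Set ℕ) : ℤ := sSup ((NS.Z H)ᶜ)

/-- The type `t(H) = #{n ∈ ℤ \ H | n + h ∈ H for all h ∈ H with h > 0}`. -/
noncomputable def NS.typ (H : Set ℕ) : ℕ :=
  {n : ℤ | n ∉ NS.Z H ∧ ∀ h ∈ H, 0 < h → n + (h : ℤ) ∈ NS.Z H}.ncard

/-- The numerical semigroup generated by `3, 4, 5`. -/
def H345 : Set ℕ := {n : ℕ | ∃ a b c : ℕ, n = 3 * a + 4 * b + 5 * c}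

/-- Every numerical semigroup `H` satisfies `2·g(H) ≥ F(H) + t(H)`. -/
lemma NS.mem_Z {H : Set ℕ} {z : ℤ} : z ∈ NS.Z H ↔ 0 ≤ z ∧ z.toNat ∈ H := by
  constructor
  · rintro ⟨m, hm, rfl⟩; simpa using hm
  · rintro ⟨h0, hm⟩; exact ⟨z.toNat, hm, Int.toNat_of_nonneg h0⟩

theorem stmt_2 (H : Set ℕ) (hH : IsNumericalSemigroup H) :
    NS.frob H + (NS.typ H : ℤ) ≤ 2 * NS.gaps H := by
  obtain ⟨h0, hadd, hfin⟩ := hH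
  by_cases hU : Hᶜ = ∅
  · -- H = ℕ
    have hH : H = Set.univ := by
      simpa [Set.compl_empty_iff] using hU
    subst hH
    have hZ : (NS.Z Set.univ)ᶜ = {z : ℤ | z < 0} := by
      ext z
      simp [NS.mem_Z, not_le]
    have hfrob : NS.frob Set.univ = -1 := by
      rw [NS.frob, hZ]
      apply IsGreatest.csSup_eq
      constructor
      · norm_num
      · intro z hz
        have : z < 0 := hz
        omega
    have htyp : NS.typ Set.univ = 1 := by
      rw [NS.typ]
      have : {n : ℤ | n ∉ NS.Z Set.univ ∧
          ∀ h ∈ (Set.univ : Set ℕ), 0 < h → n + (h : ℤ) ∈ NS.Z Set.univ} = {-1} := by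
        ext z
        simp only [Set.mem_setOf_eq, NS.mem_Z, Set.mem_univ, true_and, and_true, Set.mem_singleton_iff]
        constructor
        · rintro ⟨hz, hall⟩
          have h1 := hall 1 trivial (by norm_num)
          omega
        · rintro rfl
          refine ⟨by omega, fun h _ hh => by omega⟩
      rw [this, Set.ncard_singleton]
    have hg : NS.gaps Set.univ = 0 := by
      simp [NS.gaps]
    rw [hfrob, htyp, hg]
    norm_num
  · -- H ≠ ℕ : there are gaps
    have hne : (hfin.toFinset).Nonempty := by
      rw [Set.Finite.toFinset_nonempty]
      exact Set.nonempty_iff_ne_empty.2 hU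
    set F : ℕ := hfin.toFinset.max' hne with hFdef
    have hFmem : F ∉ H := by
      have := hfin.toFinset.max'_mem hne
      rw [Set.Finite.mem_toFinset] at this
      exact this
    have hFle : ∀ m ∉ H, m ≤ F := by
      intro m hm
      exact hfin.toFinset.le_max' m (by rwa [Set.Finite.mem_toFinset])
    have hgt : ∀ n, F < n → n ∈ H := by
      intro n hn
      by_contra hc
      exact absurd (hFle n hc) (by omega)
    -- frob = F
    have hfrob : NS.frob H = (F : ℤ) := by
      rw [NS.frob]
      apply IsGreatest.csSup_eq
      constructor
      · simp only [Set.mem_compl_iff, NS.mem_Z, not_and]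
        intro _
        simpa using hFmem
      · intro z hz
        by_contra hc
        push_neg at hc
        apply hz
        refine NS.mem_Z.2 ⟨by omega, hgt _ ?_⟩
        omega
    -- PF in ℕ
    set PF : Set ℕ := {m | m ∉ H ∧ ∀ h ∈ H, 0 < h → m + h ∈ H} with hPFdef
    have hFPF : F ∈ PF := by
      refine ⟨hFmem, fun h hh hpos => hgt _ (by omega)⟩
    have htyp : NS.typ H = PF.ncard := by
      rw [NS.typ]
      have himg : {n : ℤ | n ∉ NS.Z H ∧ ∀ h ∈ H, 0 < h → n + (h : ℤ) ∈ NS.Z H}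
          = (fun n : ℕ => (n : ℤ)) '' PF := by
        ext z
        simp only [Set.mem_setOf_eq, Set.mem_image]
        constructor
        · rintro ⟨hz, hall⟩
          have hz0 : 0 ≤ z := by
            by_contra hneg
            push_neg at hneg
            have hh : ((F : ℤ) - z).toNat ∈ H := hgt _ (by omega)
            have hpos : 0 < ((F : ℤ) - z).toNat := by omega
            have := hall _ hh hpos
            rw [NS.mem_Z] at this
            obtain ⟨_, hmem⟩ := this
            have : (z + ((F:ℤ) - z).toNat).toNat = F := by omega
            rw [this] at hmem
            exact hFmem hmem
          refine ⟨z.toNat, ⟨?_, ?_⟩, by omega⟩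
          · intro hc
            exact hz (NS.mem_Z.2 ⟨hz0, hc⟩)
          · intro h hh hpos
            have := hall h hh hpos
            rw [NS.mem_Z] at this
            obtain ⟨_, hmem⟩ := this
            have heq : (z + (h:ℤ)).toNat = z.toNat + h := by omega
            rwa [heq] at hmem
        · rintro ⟨m, ⟨hm, hall⟩, rfl⟩
          constructor
          · intro hc
            rw [NS.mem_Z] at hc
            exact hm (by simpa using hc.2)
          · intro h hh hpos
            refine NS.mem_Z.2 ⟨by positivity, ?_⟩
            have : ((m : ℤ) + (h:ℤ)).toNat = m + h := by omega
            rw [this]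
            exact hall h hh hpos
      rw [himg, Set.ncard_image_of_injective _ (fun a b => by omega)]
    -- counting sets
    set A : Set ℕ := (fun h => F - h) '' (H ∩ Set.Iic F) with hAdef
    set B : Set ℕ := PF \ {F} with hBdef
    have hAsub : A ⊆ Hᶜ := by
      rintro _ ⟨h, ⟨hhH, hhle⟩, rfl⟩
      intro hc
      apply hFmem
      have := hadd _ hc _ hhH
      rwa [Nat.sub_add_cancel hhle] at this
    have hBsub : B ⊆ Hᶜ := fun m hm => hm.1.1
    have hdisj : Disjoint A B := by
      rw [Set.disjoint_left]
      rintro _ ⟨h, ⟨hhH, hhle⟩, rfl⟩ ⟨hPF, hne'⟩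
      simp only [Set.mem_Iic] at hhle
      have hpos : 0 < h := by
        rcases Nat.eq_zero_or_pos h with rfl | hp
        · exact absurd (by simp) hne'
        · exact hp
      have := hPF.2 h hhH hpos
      rw [Nat.sub_add_cancel hhle] at this
      exact hFmem this
    have hAfin : A.Finite := hfin.subset hAsub
    have hBfin : B.Finite := hfin.subset hBsub
    -- A.ncard = (H ∩ Iic F).ncard
    have hAcard : A.ncard = (H ∩ Set.Iic F).ncard := by
      apply Set.ncard_image_of_injOn
      intro a ha b hb hab
      simp only [Set.mem_inter_iff, Set.mem_Iic] at ha hb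
      have hab' : F - a = F - b := hab
      omega
    -- (H ∩ Iic F).ncard + gaps = F + 1
    have hIic : (H ∩ Set.Iic F) ∪ Hᶜ = Set.Iic F := by
      ext n
      simp only [Set.mem_union, Set.mem_inter_iff, Set.mem_Iic, Set.mem_compl_iff]
      constructor
      · rintro (⟨_, hn⟩ | hn)
        · exact hn
        · exact hFle n hn
      · intro hn
        by_cases hc : n ∈ H
        · exact Or.inl ⟨hc, hn⟩
        · exact Or.inr hc
    have hIicdisj : Disjoint (H ∩ Set.Iic F) Hᶜ := by
      rw [Set.disjoint_left]
      rintro n ⟨hn, _⟩ hc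
      exact hc hn
    have hIiccard : (Set.Iic F).ncard = F + 1 := by
      have : (Set.Iic F : Set ℕ) = ↑(Finset.Iic F) := by simp
      rw [this, Set.ncard_coe_finset, Nat.card_Iic]
    have hcount : (H ∩ Set.Iic F).ncard + NS.gaps H = F + 1 := by
      have hfin1 : (H ∩ Set.Iic F).Finite :=
        (Set.finite_Iic F).subset Set.inter_subset_right
      rw [NS.gaps, ← Set.ncard_union_eq hIicdisj hfin1 hfin, hIic, hIiccard]
    have hsum : A.ncard + B.ncard ≤ NS.gaps H := by
      rw [NS.gaps, ← Set.ncard_union_eq hdisj hAfin hBfin]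
      exact Set.ncard_le_ncard (Set.union_subset hAsub hBsub) hfin
    have hPFfin : PF.Finite := hfin.subset (fun m hm => hm.1)
    have hBcard : B.ncard + 1 = PF.ncard :=
      Set.ncard_diff_singleton_add_one hFPF hPFfin
    have hnat : F + PF.ncard ≤ 2 * NS.gaps H := by omega
    rw [hfrob, htyp]
    exact_mod_cast hnat
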